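/- Let M = M(h,c) be the Verma module of highest weight (h,c) over the Virasoro algebra and (M,δ) a 1-differential module over (Vir, d_{n,a}) with δ ≠ −id_M, where n is a nonzero integer and a ∈ ℂ*. Then (n−1)c = 0, the vector u := (δ + id)(v₀) is a nonzero element of the weight space M_{(n−1)h} (so (1−n)h ∈ ℤ_{≥0}), and L_{ni}·u = 0 for all positive integers i (u is an n-singular vector). -/

import Mathlib

/-- The defining bracket relations of the Virasoro algebra on a family `L : ℤ → V`
and a central element `C`. -/
def VirRel {V : Type*} [LieRing V] [LieAlgebra ℂ V] (L : ℤ → V) (C : V) : Prop :=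
  (∀ m n : ℤ, ⁅L m, L n⁆ = ((n : ℂ) - (m : ℂ)) • L (m + n)
      + (if m + n = 0 then ((m : ℂ) ^ 3 - (m : ℂ)) / 12 else 0) • C) ∧
  ∀ m : ℤ, ⁅C, L m⁆ = 0

/-- `f` has the values of `φ_n ∘ τ_a` on the basis:
`f(L_i) = (a^i/n)(L_{ni} - δ_{i,0}((n²-1)/24)C)` and `f(C) = nC`. -/
def PhiTau {V : Type*} [LieRing V] [LieAlgebra ℂ V] (L : ℤ → V) (C : V)
    (n : ℤ) (a : ℂ) (f : V →ₗ[ℂ] V) : Prop :=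
  (∀ i : ℤ, f (L i) = (a ^ i / (n : ℂ)) •
      (L (n * i) - (if i = 0 then ((n : ℂ) ^ 2 - 1) / 24 else 0) • C)) ∧
  f C = (n : ℂ) • C


/-- for a 1-differential module structure `δ ≠ -id` on the Verma
module `M(h,c)` over `(Vir, d_{n,a})`, one has `(n-1)c = 0`, the vector
`u = (δ+id)v₀` is a nonzero vector of weight `nh` (i.e. `u ∈ M_{(n-1)h}`, so that
`(1-n)h ∈ ℤ₊`), and `u` is an `n`-singular vector. -/
theorem stmt_11 {V : Type*} [LieRing V] [LieAlgebra ℂ V]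
    (L : ℤ → V) (C : V)
    (b : Module.Basis (Option ℤ) ℂ V) (hbL : ∀ i : ℤ, b (some i) = L i) (hbC : b none = C)
    (hrel : VirRel L C)
    {M : Type*} [AddCommGroup M] [Module ℂ M] [LieRingModule V M] [LieModule ℂ V M]
    (h c : ℂ) (v₀ : M) (hv₀ : v₀ ≠ 0)
    -- highest weight vector of weight (h,c):
    (hw0 : ⁅L 0, v₀⁆ = h • v₀) (hwC : ⁅C, v₀⁆ = c • v₀)
    (hwpos : ∀ i : ℤ, 0 < i → ⁅L i, v₀⁆ = 0)
    -- M is generated by v₀ :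
    (hgen : ∀ N : LieSubmodule ℂ V M, v₀ ∈ N → ∀ m : M, m ∈ N)
    -- M is the sum of its weight spaces M_{-k}, k ∈ ℤ₊ :
    (hdec : ∀ m : M, m ∈ Submodule.span ℂ
      {w : M | ∃ k : ℕ, ⁅L 0, w⁆ = (h - (k : ℂ)) • w ∧ ⁅C, w⁆ = c • w})
    (n : ℤ) (hn : n ≠ 0) (a : ℂ) (ha : a ≠ 0)
    (f : V →ₗ[ℂ] V) (hf : PhiTau L C n a f)
    (δ : M →ₗ[ℂ] M) (hδ : δ ≠ -(LinearMap.id : M →ₗ[ℂ] M))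
    -- (M,δ) is a 1-differential module over (Vir, d_{n,a}) with d_{n,a} = f - id :
    (hdm : ∀ (x : V) (m : M),
      δ ⁅x, m⁆ = ⁅f x - x, m⁆ + ⁅x, δ m⁆ + ⁅f x - x, δ m⁆) :
    ((n : ℂ) - 1) * c = 0 ∧
    δ v₀ + v₀ ≠ 0 ∧
    ⁅L 0, δ v₀ + v₀⁆ = ((n : ℂ) * h) • (δ v₀ + v₀) ∧
    ⁅C, δ v₀ + v₀⁆ = c • (δ v₀ + v₀) ∧
    (∃ k : ℕ, (1 - (n : ℂ)) * h = (k : ℂ)) ∧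
    ∀ i : ℤ, 0 < i → ⁅L (n * i), δ v₀ + v₀⁆ = 0 := by
  obtain ⟨hfL, hfC⟩ := hf
  have hnC : (n : ℂ) ≠ 0 := Int.cast_ne_zero.mpr hn
  set u : M := δ v₀ + v₀ with hu_def
  -- Key reformulation: (δ + id)⁅x, m⁆ = ⁅f x, (δ + id) m⁆
  have hD : ∀ (x : V) (m : M), δ ⁅x, m⁆ + ⁅x, m⁆ = ⁅f x, δ m + m⁆ := by
    intro x m
    rw [hdm, sub_lie, sub_lie, lie_add]
    abel
  -- u ≠ 0
  have hune : u ≠ 0 := by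
    intro h0
    apply hδ
    let N : LieSubmodule ℂ V M :=
      { carrier := {m : M | δ m + m = 0}
        add_mem' := by
          intro x y hx hy
          simp only [Set.mem_setOf_eq, map_add] at *
          calc δ x + δ y + (x + y) = (δ x + x) + (δ y + y) := by abel
          _ = 0 := by rw [hx, hy, add_zero]
        zero_mem' := by simp
        smul_mem' := by
          intro t x hx
          simp only [Set.mem_setOf_eq, map_smul] at *
          rw [← smul_add, hx, smul_zero]
        lie_mem := by
          intro x m hm
          simp only [Set.mem_setOf_eq] at *
          rw [hD x m, hm, lie_zero] }
    have hmem : ∀ m : M, m ∈ N := hgen N h0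
    ext m
    have := hmem m
    simp only [N, LieSubmodule.mem_mk_iff, Set.mem_setOf_eq] at this
    simp only [LinearMap.neg_apply, LinearMap.id_apply]
    linear_combination (norm := abel) this
  -- ⁅C, u⁆ = c • u  (u lies in the span of vectors annihilated by C - c)
  have hCu : ⁅C, u⁆ = c • u := by
    have hle : Submodule.span ℂ
        {w : M | ∃ k : ℕ, ⁅L 0, w⁆ = (h - (k : ℂ)) • w ∧ ⁅C, w⁆ = c • w} ≤
        Module.End.eigenspace (LieModule.toEnd ℂ V M C) c := by
      refine Submodule.span_le.mpr ?_
      rintro w ⟨k, -, hk2⟩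
      exact Module.End.mem_eigenspace_iff.mpr (by simpa using hk2)
    have := hle (hdec u)
    simpa using Module.End.mem_eigenspace_iff.mp this
  -- from the C-equation: c • u = (n*c) • u
  have hCeq : c • u = ((n : ℂ) * c) • u := by
    have := hD C v₀
    rw [hwC, map_smul, hfC, smul_lie] at this
    calc c • u = c • δ v₀ + c • v₀ := by rw [hu_def, smul_add]
    _ = (n : ℂ) • ⁅C, δ v₀ + v₀⁆ := this
    _ = ((n : ℂ) * c) • u := by rw [hCu, smul_smul]
  have hc1 : ((n : ℂ) - 1) * c = 0 := by
    have h2 : (c - (n : ℂ) * c) • u = 0 := by rw [sub_smul, hCeq, sub_self]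
    rcases smul_eq_zero.mp h2 with h3 | h3
    · linear_combination -h3
    · exact absurd h3 hune
  -- ⁅L 0, u⁆ = (n h) • u
  have hn2c : (((n : ℂ) ^ 2 - 1) / 24) * c = 0 := by
    linear_combination (((n : ℂ) + 1) / 24) * hc1
  have hL0u : ⁅L 0, u⁆ = ((n : ℂ) * h) • u := by
    have := hD (L 0) v₀
    rw [hw0, map_smul, hfL 0, if_pos rfl, mul_zero, zpow_zero] at this
    rw [smul_lie, sub_lie, smul_lie, hCu, smul_smul, hn2c, zero_smul, sub_zero] at this
    have h4 : h • u = ((1 : ℂ) / (n : ℂ)) • ⁅L 0, u⁆ := by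
      calc h • u = h • δ v₀ + h • v₀ := by rw [hu_def, smul_add]
      _ = ((1 : ℂ) / (n : ℂ)) • ⁅L 0, δ v₀ + v₀⁆ := this
    have h5 : (n : ℂ) • (h • u) = ⁅L 0, u⁆ := by
      rw [h4, smul_smul, mul_one_div, div_self hnC, one_smul]
    rw [← h5, smul_smul]
  -- n-singular vector
  have hsing : ∀ i : ℤ, 0 < i → ⁅L (n * i), u⁆ = 0 := by
    intro i hi
    have := hD (L i) v₀
    rw [hwpos i hi, map_zero, zero_add, hfL i, if_neg (by omega : i ≠ 0),
      zero_smul, sub_zero, smul_lie] at this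
    have hcoef : a ^ i / (n : ℂ) ≠ 0 := div_ne_zero (zpow_ne_zero i ha) hnC
    rcases smul_eq_zero.mp this.symm with h3 | h3
    · exact absurd h3 hcoef
    · exact h3
  -- weight : ∃ k, (1-n) h = k
  have hex : ∃ k : ℕ, (1 - (n : ℂ)) * h = (k : ℂ) := by
    by_contra hcon
    push_neg at hcon
    set T := LieModule.toEnd ℂ V M (L 0) with hT
    have hle : Submodule.span ℂ
        {w : M | ∃ k : ℕ, ⁅L 0, w⁆ = (h - (k : ℂ)) • w ∧ ⁅C, w⁆ = c • w} ≤
        ⨆ k : ℕ, Module.End.eigenspace T (h - (k : ℂ)) := by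
      refine Submodule.span_le.mpr ?_
      rintro w ⟨k, hk1, -⟩
      exact SetLike.le_def.mp (le_iSup (fun k : ℕ => Module.End.eigenspace T (h - (k : ℂ))) k)
        (Module.End.mem_eigenspace_iff.mpr (by simpa [hT] using hk1))
    have hu1 : u ∈ Module.End.eigenspace T ((n : ℂ) * h) :=
      Module.End.mem_eigenspace_iff.mpr (by simpa [hT] using hL0u)
    have hu2 : u ∈ ⨆ (μ : ℂ) (_ : μ ≠ (n : ℂ) * h), Module.End.eigenspace T μ := by
      refine (iSup_le fun k : ℕ => ?_ : (⨆ k : ℕ, Module.End.eigenspace T (h - (k : ℂ))) ≤ _)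
        (hle (hdec u))
      refine le_iSup₂ (f := fun (μ : ℂ) (_ : μ ≠ (n : ℂ) * h) => Module.End.eigenspace T μ)
        (h - (k : ℂ)) ?_
      intro heq
      exact hcon k (by linear_combination heq)
    have hdisj := iSupIndep_def.mp (Module.End.eigenspaces_iSupIndep T) ((n : ℂ) * h)
    exact hune (Submodule.disjoint_def.mp hdisj u hu1 hu2)
  exact ⟨hc1, hune, hL0u, hCu, hex, hsing⟩
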